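/- Irrotational Killing fields on the Carter-Pleba\'nski boundary: for the metric $\hat{g} = -d\tau^2 + \frac{\ell^2}{\mathsf{P}(p)}dp^2 + (\ell^2\mathsf{P}(p) - p^4)d\sigma^2 + 2p^2 d\tau\, d\sigma$ with $\mathsf{P}(p) = p^4/\ell^2 - \epsilon p^2 + \Gamma$, a Killing field $\xi = A\partial_\tau + B\partial_\sigma$ (with $B \neq 0$) is hypersurface-orthogonal (its orthogonal distribution is involutive) if and only if $A^2 - \epsilon\ell^2 AB + B^2\ell^2\Gamma = 0$, which has real solutions $A = \alpha_\pm B$ with $\alpha_\pm = \ell^2(\epsilon \pm \sqrt{\Delta})/2$ precisely when $\Delta = \epsilon^2 - 4\Gamma/\ell^2 \geq 0$. Moreover, for $\xi_\pm = \alpha_\pm \partial_\tau + \partial_\sigma$, one has $\hat{g}(\xi_\pm, \xi_\pm) = \pm\ell^2\sqrt{\Delta}(p^2 - \alpha_\pm)$ and $\hat{g}(\xi_+, \xi_-) = 0$. -/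

import Mathlib

noncomputable section

open Real Matrix

/-- Boundary metric of the Carter–Plebański solution in coordinates (τ,p,σ):
ĝ = -dτ² + (ℓ²/P(p))dp² + (ℓ²P(p)-p⁴)dσ² + 2p² dτ dσ, with
P(p) = p⁴/ℓ² - εp² + Γ. -/
def cpBoundaryMetric (ℓ ε Γ : ℝ) (p : ℝ) : Matrix (Fin 3) (Fin 3) ℝ :=
  !![-1, 0, p ^ 2;
     0, ℓ ^ 2 / (p ^ 4 / ℓ ^ 2 - ε * p ^ 2 + Γ), 0;
     p ^ 2, 0, ℓ ^ 2 * (p ^ 4 / ℓ ^ 2 - ε * p ^ 2 + Γ) - p ^ 4]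

/-- Lowered components ξ_μ = ĝ_{μν}ξ^ν of the Killing field ξ = A∂_τ + B∂_σ
(component order (τ,p,σ)). -/
def xiLow (ℓ ε Γ A B : ℝ) (p : ℝ) (μ : Fin 3) : ℝ :=
  ∑ ν, cpBoundaryMetric ℓ ε Γ p μ ν * ![A, 0, B] ν

/-- Frobenius twist scalar ε^{μνρ}ξ_μ∂_νξ_ρ of ξ (which depends only on p). -/
def xiTwist (ℓ ε Γ A B : ℝ) (p : ℝ) : ℝ :=
  xiLow ℓ ε Γ A B p 0 * deriv (fun q => xiLow ℓ ε Γ A B q 2) p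
    - xiLow ℓ ε Γ A B p 2 * deriv (fun q => xiLow ℓ ε Γ A B q 0) p

lemma xiLow0' (ℓ ε Γ A B q : ℝ) : xiLow ℓ ε Γ A B q 0 = -A + q^2*B := by
  simp [xiLow, cpBoundaryMetric, Fin.sum_univ_three]

lemma xiLow2' (ℓ ε Γ A B q : ℝ) (hℓ : ℓ ≠ 0) :
    xiLow ℓ ε Γ A B q 2 = q^2*A + (ℓ^2*Γ - ε*ℓ^2*q^2)*B := by
  have h : ℓ ^ 2 * (q ^ 4 / ℓ ^ 2 - ε * q ^ 2 + Γ) - q ^ 4 = ℓ ^ 2 * Γ - ε * ℓ ^ 2 * q ^ 2 := by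
    field_simp; ring
  simp only [xiLow, cpBoundaryMetric, Fin.sum_univ_three]
  norm_num
  simp [Matrix.cons_val]
  exact Or.inl h

lemma twist_eq' (ℓ ε Γ A B p : ℝ) (hℓ : ℓ ≠ 0) :
    xiTwist ℓ ε Γ A B p = -2*p*(A^2 - ε*ℓ^2*A*B + B^2*ℓ^2*Γ) := by
  have d0 : deriv (fun q => xiLow ℓ ε Γ A B q 0) p = 2*p*B := by
    have e : (fun q => xiLow ℓ ε Γ A B q 0) = fun q => -A + q^2*B :=
      funext fun q => xiLow0' ℓ ε Γ A B q
    have h : HasDerivAt (fun q : ℝ => -A + q^2*B) (↑2*p^(2-1)*B) p :=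
      ((hasDerivAt_pow 2 p).mul_const B).const_add (-A)
    rw [e, h.deriv]; norm_num
  have d2 : deriv (fun q => xiLow ℓ ε Γ A B q 2) p = 2*p*A - ε*ℓ^2*(2*p)*B := by
    have e : (fun q => xiLow ℓ ε Γ A B q 2) = fun q => q^2*A + (ℓ^2*Γ - ε*ℓ^2*q^2)*B :=
      funext fun q => xiLow2' ℓ ε Γ A B q hℓ
    have h : HasDerivAt (fun q : ℝ => q^2*A + (ℓ^2*Γ - ε*ℓ^2*q^2)*B)
        (↑2*p^(2-1)*A + (-(ε*ℓ^2*(↑2*p^(2-1))))*B) p :=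
      ((hasDerivAt_pow 2 p).mul_const A).add
        ((((hasDerivAt_pow 2 p).const_mul (ε*ℓ^2)).const_sub (ℓ^2*Γ)).mul_const B)
    rw [e, h.deriv]; norm_num; ring
  unfold xiTwist
  rw [d0, d2, xiLow0', xiLow2' _ _ _ _ _ _ hℓ]
  ring

lemma gsum' (ℓ ε Γ a b p : ℝ) (hℓ : ℓ ≠ 0) :
    (∑ μ, ∑ ν, cpBoundaryMetric ℓ ε Γ p μ ν * ![a, 0, 1] μ * ![b, 0, 1] ν)
      = -(a*b) + (a+b)*p^2 + (ℓ^2*Γ - ε*ℓ^2*p^2) := by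
  have h : ℓ ^ 2 * (p ^ 4 / ℓ ^ 2 - ε * p ^ 2 + Γ) - p ^ 4 = ℓ ^ 2 * Γ - ε * ℓ ^ 2 * p ^ 2 := by
    field_simp; ring
  simp [cpBoundaryMetric, Fin.sum_univ_three]
  linear_combination h

/-- **Irrotational Killing fields on the Carter–Plebański boundary.**
ξ = A∂_τ + B∂_σ (B ≠ 0) is hypersurface-orthogonal iff
A² - εℓ²AB + B²ℓ²Γ = 0, which has real solutions A = α±B with
α± = ℓ²(ε±√Δ)/2 precisely when Δ = ε² - 4Γ/ℓ² ≥ 0; moreover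
ĝ(ξ±,ξ±) = ±ℓ²√Δ(p²-α±) and ĝ(ξ₊,ξ₋) = 0 for ξ± = α±∂_τ + ∂_σ. -/
theorem cp_boundary_irrotational_killing (ℓ ε Γ : ℝ) (hℓ : 0 < ℓ) :
    (∀ A B : ℝ, B ≠ 0 →
      ((∀ p : ℝ, xiTwist ℓ ε Γ A B p = 0) ↔
        A ^ 2 - ε * ℓ ^ 2 * A * B + B ^ 2 * ℓ ^ 2 * Γ = 0)) ∧
    (∀ B : ℝ, B ≠ 0 →
      ((∃ A : ℝ, A ^ 2 - ε * ℓ ^ 2 * A * B + B ^ 2 * ℓ ^ 2 * Γ = 0) ↔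
        ε ^ 2 - 4 * Γ / ℓ ^ 2 ≥ 0)) ∧
    (ε ^ 2 - 4 * Γ / ℓ ^ 2 ≥ 0 →
      (∀ A B : ℝ,
        (A ^ 2 - ε * ℓ ^ 2 * A * B + B ^ 2 * ℓ ^ 2 * Γ = 0 ↔
          A = ℓ ^ 2 * (ε + Real.sqrt (ε ^ 2 - 4 * Γ / ℓ ^ 2)) / 2 * B ∨
          A = ℓ ^ 2 * (ε - Real.sqrt (ε ^ 2 - 4 * Γ / ℓ ^ 2)) / 2 * B)) ∧
      (∀ p : ℝ,
        (∑ μ, ∑ ν, cpBoundaryMetric ℓ ε Γ p μ ν *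
            ![ℓ ^ 2 * (ε + Real.sqrt (ε ^ 2 - 4 * Γ / ℓ ^ 2)) / 2, 0, 1] μ *
            ![ℓ ^ 2 * (ε + Real.sqrt (ε ^ 2 - 4 * Γ / ℓ ^ 2)) / 2, 0, 1] ν)
          = ℓ ^ 2 * Real.sqrt (ε ^ 2 - 4 * Γ / ℓ ^ 2) *
              (p ^ 2 - ℓ ^ 2 * (ε + Real.sqrt (ε ^ 2 - 4 * Γ / ℓ ^ 2)) / 2)) ∧
      (∀ p : ℝ,
        (∑ μ, ∑ ν, cpBoundaryMetric ℓ ε Γ p μ ν *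
            ![ℓ ^ 2 * (ε - Real.sqrt (ε ^ 2 - 4 * Γ / ℓ ^ 2)) / 2, 0, 1] μ *
            ![ℓ ^ 2 * (ε - Real.sqrt (ε ^ 2 - 4 * Γ / ℓ ^ 2)) / 2, 0, 1] ν)
          = -(ℓ ^ 2 * Real.sqrt (ε ^ 2 - 4 * Γ / ℓ ^ 2) *
              (p ^ 2 - ℓ ^ 2 * (ε - Real.sqrt (ε ^ 2 - 4 * Γ / ℓ ^ 2)) / 2))) ∧
      (∀ p : ℝ,
        (∑ μ, ∑ ν, cpBoundaryMetric ℓ ε Γ p μ ν *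
            ![ℓ ^ 2 * (ε + Real.sqrt (ε ^ 2 - 4 * Γ / ℓ ^ 2)) / 2, 0, 1] μ *
            ![ℓ ^ 2 * (ε - Real.sqrt (ε ^ 2 - 4 * Γ / ℓ ^ 2)) / 2, 0, 1] ν) = 0)) := by
  have hℓ' : ℓ ≠ 0 := hℓ.ne'
  refine ⟨?_, ?_, ?_⟩
  · intro A B _
    constructor
    · intro h
      have h1 := h 1
      rw [twist_eq' ℓ ε Γ A B 1 hℓ'] at h1
      linarith
    · intro hQ p
      rw [twist_eq' ℓ ε Γ A B p hℓ', hQ]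
      ring
  · intro B hB
    constructor
    · rintro ⟨A, hA⟩
      have hB2 : 0 < B ^ 2 := by positivity
      have hℓ2 : 0 < ℓ ^ 2 := by positivity
      have key : ε ^ 2 * ℓ ^ 2 - 4 * Γ ≥ 0 := by
        nlinarith [sq_nonneg (2*A - ε*ℓ^2*B), mul_pos hℓ2 hB2]
      have : ε ^ 2 - 4 * Γ / ℓ ^ 2 = (ε ^ 2 * ℓ ^ 2 - 4 * Γ) / ℓ ^ 2 := by
        field_simp
      rw [this]
      positivity
    · intro hΔ
      set s := Real.sqrt (ε ^ 2 - 4 * Γ / ℓ ^ 2) with hs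
      have hs2 : s ^ 2 * ℓ ^ 2 = ε ^ 2 * ℓ ^ 2 - 4 * Γ := by
        rw [hs, Real.sq_sqrt hΔ]; field_simp
      exact ⟨ℓ ^ 2 * (ε + s) / 2 * B, by linear_combination (B^2*ℓ^2/4) * hs2⟩
  · intro hΔ
    set s := Real.sqrt (ε ^ 2 - 4 * Γ / ℓ ^ 2) with hs
    have hs2 : s ^ 2 * ℓ ^ 2 = ε ^ 2 * ℓ ^ 2 - 4 * Γ := by
      rw [hs, Real.sq_sqrt hΔ]; field_simp
    refine ⟨?_, ?_, ?_, ?_⟩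
    · intro A B
      have key : A ^ 2 - ε * ℓ ^ 2 * A * B + B ^ 2 * ℓ ^ 2 * Γ
          = (A - ℓ ^ 2 * (ε + s) / 2 * B) * (A - ℓ ^ 2 * (ε - s) / 2 * B) := by
        linear_combination (B^2*ℓ^2/4) * hs2
      rw [key, mul_eq_zero, sub_eq_zero, sub_eq_zero]
    · intro p
      rw [gsum' ℓ ε Γ _ _ p hℓ']
      linear_combination (ℓ^2/4) * hs2
    · intro p
      rw [gsum' ℓ ε Γ _ _ p hℓ']
      linear_combination (ℓ^2/4) * hs2
    · intro p
      rw [gsum' ℓ ε Γ _ _ p hℓ']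
      linear_combination (ℓ^2/4) * hs2

end
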